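/- arXiv:2206.08342 — 3 statements merged into one kernel-verified Lean document; each statement's English description precedes it below -/
import Mathlib

section
/- Let M be the real symmetric 4×4 matrix with rows/columns indexed by {I, S12, S13, S23}, with all diagonal entries equal to 1, entries M(I,S12)=p, M(I,S13)=q, M(I,S23)=r, and all off-diagonal entries among {S12,S13,S23} equal to (s−1)/2 where s=p+q+r. Then M is positive semidefinite if and only if 0 ≤ p+q+r ≤ 3 and p² + q² + r² + 2(p+q+r) − 2(pq+pr+qr) ≤ 3. -/
open Matrix

lemma aux_fwd (s u : ℝ) (hu : 0 ≤ u) (h1 : 0 ≤ -2*u^2 + 3*(3-s)*u)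
    (h2 : 0 ≤ 3*u*(3-s)*((3-s)^2/2 - u)) : 2*u ≤ (3-s)^2 := by
  rcases hu.eq_or_lt with h | h
  · nlinarith [sq_nonneg (3-s)]
  · have hs : 0 < 3 - s := by nlinarith
    nlinarith [mul_pos h hs]

lemma aux_bwd (s C Y σ m : ℝ) (h0 : 0 ≤ s) (h3 : s ≤ 3) (hC : 0 ≤ C) (hY : 0 ≤ Y)
    (hm : m^2 ≤ C*Y) (hu : 6*C ≤ (3-s)^2) :
    0 ≤ s*(3-s)/9*σ^2 - 2*s/3*(σ*m) + (3-s)/2*Y - m^2 := by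
  rcases hC.eq_or_lt with hC0 | hC0
  · have hm0 : m = 0 := by nlinarith
    subst hm0
    have h1 : 0 ≤ s * (3-s) := mul_nonneg h0 (by linarith)
    nlinarith [mul_nonneg h1 (sq_nonneg σ), mul_nonneg (by linarith : (0:ℝ) ≤ 3 - s) hY]
  · rcases h0.eq_or_lt with hs0 | hs0
    · subst hs0
      nlinarith [hm, mul_nonneg hY (by linarith : (0:ℝ) ≤ 3/2 - C)]
    · rcases h3.eq_or_lt with hs3 | hs3
      · exfalso; rw [← hs3] at hu; nlinarith
      · have hs3' : 0 < 3 - s := by linarith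
        have hA : 0 < 36*(C*C)*(s*(3-s)) :=
          mul_pos (mul_pos (by norm_num) (mul_pos hC0 hC0)) (mul_pos hs0 hs3')
        have T2 : 0 ≤ 18*s*C*((3-s)^2-6*C)*m^2 := by
          have : 0 ≤ 18*s*C*((3-s)^2-6*C) := by
            apply mul_nonneg
            · nlinarith
            · linarith
          exact mul_nonneg this (sq_nonneg m)
        have T3 : 0 ≤ 18*s*(3-s)^2*C*(C*Y-m^2) := by
          apply mul_nonneg
          · nlinarith [sq_nonneg (3-s)]
          · linarith
        nlinarith [hA, sq_nonneg (2*s*(3-s)*C*σ - 6*s*C*m), T2, T3]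

set_option maxHeartbeats 1000000 in
theorem triangle_psd_iff (p q r : ℝ) :
    (!![1, p, q, r;
        p, 1, (p + q + r - 1) / 2, (p + q + r - 1) / 2;
        q, (p + q + r - 1) / 2, 1, (p + q + r - 1) / 2;
        r, (p + q + r - 1) / 2, (p + q + r - 1) / 2, 1] :
        Matrix (Fin 4) (Fin 4) ℝ).PosSemidef ↔
    (0 ≤ p + q + r ∧ p + q + r ≤ 3 ∧
      p ^ 2 + q ^ 2 + r ^ 2 + 2 * (p + q + r) - 2 * (p * q + p * r + q * r) ≤ 3) := by
  constructor
  · intro h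
    have hq : ∀ a b c d : ℝ,
        0 ≤ a^2+b^2+c^2+d^2 + 2*a*(p*b+q*c+r*d) + (p+q+r-1)*(b*c+b*d+c*d) := by
      intro a b c d
      have h1 := h.dotProduct_mulVec_nonneg ![a,b,c,d]
      simp [dotProduct, mulVec, Fin.sum_univ_four, Matrix.cons_val_zero, Matrix.cons_val_one,
        Matrix.head_cons, Matrix.vecHead, Matrix.vecTail] at h1
      nlinarith [h1]
    have hs0 : 0 ≤ p + q + r := by have := hq 0 1 1 1; linarith
    have hs3 : p + q + r ≤ 3 := by have := hq (-3) 1 1 1; linarith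
    refine ⟨hs0, hs3, ?_⟩
    have hu : 0 ≤ 3*(p^2+q^2+r^2) - (p+q+r)^2 := by
      nlinarith [sq_nonneg (p-q), sq_nonneg (q-r), sq_nonneg (p-r)]
    have hA := hq (-(3*(p^2+q^2+r^2) - (p+q+r)^2))
      (3*p-(p+q+r)) (3*q-(p+q+r)) (3*r-(p+q+r))
    have hB := hq (-(3*(3*(p^2+q^2+r^2) - (p+q+r)^2)))
      ((3-(p+q+r))*(3*p-(p+q+r))+(3*(p^2+q^2+r^2) - (p+q+r)^2))
      ((3-(p+q+r))*(3*q-(p+q+r))+(3*(p^2+q^2+r^2) - (p+q+r)^2))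
      ((3-(p+q+r))*(3*r-(p+q+r))+(3*(p^2+q^2+r^2) - (p+q+r)^2))
    have key := aux_fwd (p+q+r) (3*(p^2+q^2+r^2) - (p+q+r)^2) hu
      (by linarith [hA]) (by linarith [hB])
    linarith [key]
  · rintro ⟨hs0, hs3, hD⟩
    refine Matrix.PosSemidef.of_dotProduct_mulVec_nonneg ?_ ?_
    · ext i j
      fin_cases i <;> fin_cases j <;> simp [Matrix.conjTranspose_apply] <;> rfl
    · intro x
      have key := aux_bwd (p+q+r)
        ((p-(p+q+r)/3)^2+(q-(p+q+r)/3)^2+(r-(p+q+r)/3)^2)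
        ((x 1-(x 1+x 2+x 3)/3)^2+(x 2-(x 1+x 2+x 3)/3)^2+(x 3-(x 1+x 2+x 3)/3)^2)
        (x 1+x 2+x 3)
        ((p-(p+q+r)/3)*(x 1-(x 1+x 2+x 3)/3)+(q-(p+q+r)/3)*(x 2-(x 1+x 2+x 3)/3)+(r-(p+q+r)/3)*(x 3-(x 1+x 2+x 3)/3))
        hs0 hs3 (by positivity) (by positivity)
        (by linarith [sq_nonneg ((p-(p+q+r)/3)*(x 2-(x 1+x 2+x 3)/3)-(q-(p+q+r)/3)*(x 1-(x 1+x 2+x 3)/3)),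
              sq_nonneg ((p-(p+q+r)/3)*(x 3-(x 1+x 2+x 3)/3)-(r-(p+q+r)/3)*(x 1-(x 1+x 2+x 3)/3)),
              sq_nonneg ((q-(p+q+r)/3)*(x 3-(x 1+x 2+x 3)/3)-(r-(p+q+r)/3)*(x 2-(x 1+x 2+x 3)/3))])
        (by linarith [hD])
      simp [dotProduct, mulVec, Fin.sum_univ_four, Matrix.cons_val_zero, Matrix.cons_val_one,
        Matrix.head_cons, Matrix.vecHead, Matrix.vecTail]
      linarith [key, sq_nonneg (x 0 + p*(x 1)+q*(x 2)+r*(x 3))]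
end

section
/- Let p, q, r be real numbers with s = p+q+r and let M be the 4×4 real symmetric matrix [[1,p,q,r],[p,1,(s−1)/2,(s−1)/2],[q,(s−1)/2,1,(s−1)/2],[r,(s−1)/2,(s−1)/2,1]]. If M is positive semidefinite and q ≤ 0, then p ≥ −√3/2. -/
open Matrix

theorem triangle_psd_large_edge (p q r : ℝ)
    (hM : (!![1, p, q, r;
        p, 1, (p + q + r - 1) / 2, (p + q + r - 1) / 2;
        q, (p + q + r - 1) / 2, 1, (p + q + r - 1) / 2;
        r, (p + q + r - 1) / 2, (p + q + r - 1) / 2, 1] :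
        Matrix (Fin 4) (Fin 4) ℝ).PosSemidef)
    (hq : q ≤ 0) :
    -(Real.sqrt 3) / 2 ≤ p := by
  set s3 := Real.sqrt 3 with hs3
  set a := Real.sqrt (2 * s3 - 1) with ha
  have hs3sq : s3 ^ 2 = 3 := Real.sq_sqrt (by norm_num)
  have hs3nn : (0:ℝ) ≤ s3 := Real.sqrt_nonneg 3
  have hs3ge : (1:ℝ) ≤ s3 := by nlinarith [hs3sq, hs3nn]
  have hasq : a ^ 2 = 2 * s3 - 1 := Real.sq_sqrt (by nlinarith)
  have h1 := hM.dotProduct_mulVec_nonneg ![s3 * a / 2, a, a / 2, 0]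
  have h2 := hM.dotProduct_mulVec_nonneg ![-s3 / 2, 0, 1 / 2, 1]
  simp [Matrix.mulVec, dotProduct, Fin.sum_univ_four] at h1 h2
  have e1 : s3 * a / 2 * (s3 * a / 2 + p * a + q * (a / 2)) +
      a * (p * (s3 * a / 2) + a + (p + q + r - 1) / 2 * (a / 2)) +
      a / 2 * (q * (s3 * a / 2) + (p + q + r - 1) / 2 * a + a / 2) =
      a ^ 2 * (2 + p * s3 + q * s3 / 2 + (p + q + r - 1) / 2) := by
    linear_combination (a ^ 2 / 4) * hs3sq
  rw [e1, hasq] at h1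
  have key : (2 * s3 - 1) * (2 + p * s3 + q * s3 / 2 + (p + q + r - 1) / 2) +
      (-s3 / 2 * (-s3 / 2 + q * 2⁻¹ + r) +
        2⁻¹ * (q * (-s3 / 2) + 2⁻¹ + (p + q + r - 1) / 2) +
        (r * (-s3 / 2) + (p + q + r - 1) / 2 * 2⁻¹ + 1)) = 6 * p + 3 * s3 + 3 * q := by
    linear_combination (2 * p + q + 1 / 4) * hs3sq
  linarith [h1, h2, hq, key]
end

section
/- Let ρ be a density matrix on n qubits (n ≥ 3) and for distinct qubits i,j define s_{ij} = Tr[S_{ij} ρ], where S_{ij} = (I + X_iX_j + Y_iY_j + Z_iZ_j)/2 is the SWAP operator on qubits i and j. Then for any three distinct qubits i, j, k: 0 ≤ s_{ij}+s_{ik}+s_{jk} ≤ 3 and s_{ij}² + s_{ik}² + s_{jk}² + 2(s_{ij}+s_{ik}+s_{jk}) − 2(s_{ij}s_{ik} + s_{ij}s_{jk} + s_{ik}s_{jk}) ≤ 3. -/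
open Matrix ComplexOrder

noncomputable def pauliX : Matrix (Fin 2) (Fin 2) ℂ := !![0, 1; 1, 0]
noncomputable def pauliY : Matrix (Fin 2) (Fin 2) ℂ := !![0, -Complex.I; Complex.I, 0]
noncomputable def pauliZ : Matrix (Fin 2) (Fin 2) ℂ := !![1, 0; 0, -1]

/-- The single-qubit operator `A` acting on qubit `i` of an `n`-qubit system,
i.e. `I ⊗ ⋯ ⊗ A ⊗ ⋯ ⊗ I`. -/
noncomputable def pauliAt (n : ℕ) (A : Matrix (Fin 2) (Fin 2) ℂ) (i : Fin n) :
    Matrix (Fin n → Fin 2) (Fin n → Fin 2) ℂ :=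
  Matrix.of fun f g => A (f i) (g i) * ∏ j ∈ Finset.univ.erase i, (if f j = g j then 1 else 0)

/-- The SWAP operator on qubits `i` and `j`:
`S_{ij} = (I + X_i X_j + Y_i Y_j + Z_i Z_j)/2`. -/
noncomputable def swapOp (n : ℕ) (i j : Fin n) :
    Matrix (Fin n → Fin 2) (Fin n → Fin 2) ℂ :=
  (1 / 2 : ℂ) • (1 + pauliAt n pauliX i * pauliAt n pauliX j
    + pauliAt n pauliY i * pauliAt n pauliY j
    + pauliAt n pauliZ i * pauliAt n pauliZ j)

noncomputable def permMat (n : ℕ) (e : Equiv.Perm (Fin n)) :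
    Matrix (Fin n → Fin 2) (Fin n → Fin 2) ℂ :=
  Matrix.of fun f g => if ∀ l, f l = g (e l) then 1 else 0

lemma permMat_refl (n : ℕ) : permMat n (Equiv.refl _) = 1 := by
  ext f g
  simp [permMat, Matrix.one_apply, funext_iff]
  congr

lemma permMat_mul (n : ℕ) (e e' : Equiv.Perm (Fin n)) :
    permMat n e * permMat n e' = permMat n (e.trans e') := by
  ext f g
  simp only [permMat, Matrix.mul_apply, Matrix.of_apply]
  rw [Finset.sum_eq_single (fun l => g (e' l))]
  · simp [Equiv.trans_apply]
    congr
  · intro h _ hne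
    rcases Function.ne_iff.mp hne with ⟨l, hl⟩
    have hz : ¬ ∀ l, h l = g (e' l) := fun hall => hl (hall l)
    rw [if_neg hz, mul_zero]
  · simp

lemma permMat_conjTranspose (n : ℕ) (e : Equiv.Perm (Fin n)) (he : e.trans e = Equiv.refl _) :
    (permMat n e)ᴴ = permMat n e := by
  ext f g
  simp only [permMat, Matrix.conjTranspose_apply, Matrix.of_apply]
  have : (∀ l, g l = f (e l)) ↔ (∀ l, f l = g (e l)) := by
    constructor
    · intro h l
      have := h (e l)
      rw [show e (e l) = l from congrArg (fun p => p.toFun l) he] at this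
      exact this.symm
    · intro h l
      have := h (e l)
      rw [show e (e l) = l from congrArg (fun p => p.toFun l) he] at this
      exact this.symm
  simp only [this]
  split_ifs <;> simp

lemma pauliAt_mul {n : ℕ} (A B : Matrix (Fin 2) (Fin 2) ℂ) (i j : Fin n) (hij : i ≠ j)
    (f g : Fin n → Fin 2) :
    (pauliAt n A i * pauliAt n B j) f g
      = A (f i) (g i) * B (f j) (g j)
        * ∏ l ∈ (Finset.univ.erase i).erase j, (if f l = g l then 1 else 0) := by
  simp only [Matrix.mul_apply, pauliAt, Matrix.of_apply]
  rw [Finset.sum_eq_single (Function.update g j (f j))]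
  · have h1 : Function.update g j (f j) i = g i := Function.update_of_ne hij _ _
    have h2 : Function.update g j (f j) j = f j := Function.update_self _ _ _
    rw [h1, h2]
    have hp1 : ∏ l ∈ Finset.univ.erase i, (if f l = Function.update g j (f j) l then (1:ℂ) else 0)
        = ∏ l ∈ (Finset.univ.erase i).erase j, (if f l = g l then (1:ℂ) else 0) := by
      rw [← Finset.mul_prod_erase (Finset.univ.erase i) _ (by simp [hij.symm] : j ∈ Finset.univ.erase i)]
      rw [h2, if_pos rfl, one_mul]
      refine Finset.prod_congr rfl fun l hl => ?_
      have hlj : l ≠ j := (Finset.mem_erase.mp hl).1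
      rw [Function.update_of_ne hlj]
    have hp2 : ∏ l ∈ Finset.univ.erase j, (if Function.update g j (f j) l = g l then (1:ℂ) else 0) = 1 := by
      refine Finset.prod_eq_one fun l hl => ?_
      have hlj : l ≠ j := (Finset.mem_erase.mp hl).1
      rw [Function.update_of_ne hlj, if_pos rfl]
    rw [hp1, hp2, mul_one]
    ring
  · intro h _ hne
    rcases Function.ne_iff.mp hne with ⟨l, hl⟩
    by_cases hlj : l = j
    · subst hlj
      rw [Function.update_self] at hl
      -- h l ≠ f l, l ∈ erase i since l = j ≠ i
      have : ∏ m ∈ Finset.univ.erase i, (if f m = h m then (1:ℂ) else 0) = 0 := by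
        apply Finset.prod_eq_zero (show l ∈ Finset.univ.erase i by simp [hij.symm])
        rw [if_neg (fun hh => hl hh.symm)]
      simp [this]
    · rw [Function.update_of_ne hlj] at hl
      have : ∏ m ∈ Finset.univ.erase j, (if h m = g m then (1:ℂ) else 0) = 0 := by
        apply Finset.prod_eq_zero (show l ∈ Finset.univ.erase j by simp [hlj])
        rw [if_neg hl]
      simp [this]
  · simp


lemma indicator_split {n : ℕ} (i j : Fin n) (hij : i ≠ j) (f h : Fin n → Fin 2) :
    (if ∀ l, f l = h l then (1:ℂ) else 0)
      = (if f i = h i then 1 else 0) * (if f j = h j then 1 else 0)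
        * ∏ l ∈ (Finset.univ.erase i).erase j, (if f l = h l then 1 else 0) := by
  have h0 : (if ∀ l, f l = h l then (1:ℂ) else 0)
      = ∏ l ∈ Finset.univ, (if f l = h l then (1:ℂ) else 0) := by
    rw [Finset.prod_boole]
    simp
  rw [h0, ← Finset.mul_prod_erase Finset.univ _ (Finset.mem_univ i),
    ← Finset.mul_prod_erase (Finset.univ.erase i) _
      (by simp [hij.symm] : j ∈ Finset.univ.erase i), mul_assoc]

lemma scalar_swap (a b c d : Fin 2) :
    (1/2:ℂ) * ((if a = b then 1 else 0) * (if c = d then 1 else 0)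
      + pauliX a b * pauliX c d + pauliY a b * pauliY c d + pauliZ a b * pauliZ c d)
    = (if a = d then 1 else 0) * (if c = b then 1 else 0) := by
  fin_cases a <;> fin_cases b <;> fin_cases c <;> fin_cases d <;>
    norm_num [pauliX, pauliY, pauliZ, Complex.ext_iff]

lemma swapOp_eq {n : ℕ} (i j : Fin n) (hij : i ≠ j) :
    swapOp n i j = permMat n (Equiv.swap i j) := by
  ext f g
  have hX := pauliAt_mul pauliX pauliX i j hij f g
  have hY := pauliAt_mul pauliY pauliY i j hij f g
  have hZ := pauliAt_mul pauliZ pauliZ i j hij f g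
  simp only [swapOp, permMat, Matrix.smul_apply, Matrix.add_apply, Matrix.one_apply,
    Matrix.of_apply, smul_eq_mul]
  rw [hX, hY, hZ]
  have hid : (if f = g then (1:ℂ) else 0)
      = (if f i = g i then 1 else 0) * (if f j = g j then 1 else 0)
        * ∏ l ∈ (Finset.univ.erase i).erase j, (if f l = g l then 1 else 0) := by
    simp only [funext_iff]
    exact indicator_split i j hij f g
  have hrhs : (if ∀ l, f l = g (Equiv.swap i j l) then (1:ℂ) else 0)
      = (if f i = g j then 1 else 0) * (if f j = g i then 1 else 0)
        * ∏ l ∈ (Finset.univ.erase i).erase j, (if f l = g l then 1 else 0) := by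
    rw [indicator_split i j hij f (fun l => g (Equiv.swap i j l))]
    rw [Equiv.swap_apply_left, Equiv.swap_apply_right]
    congr 1
    refine Finset.prod_congr rfl fun l hl => ?_
    simp only [Finset.mem_erase] at hl
    rw [Equiv.swap_apply_of_ne_of_ne hl.2.1 hl.1]
  rw [hid, hrhs]
  linear_combination (∏ l ∈ (Finset.univ.erase i).erase j, (if f l = g l then (1:ℂ) else 0))
    * scalar_swap (f i) (g i) (f j) (g j)


lemma permMat_qubit {n : ℕ} (i j k : Fin n) (hij : i ≠ j) (hik : i ≠ k) (hjk : j ≠ k) :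
    permMat n ((Equiv.swap i j).trans (Equiv.swap i k))
      + permMat n ((Equiv.swap i k).trans (Equiv.swap i j)) + 1
    = permMat n (Equiv.swap i j) + permMat n (Equiv.swap i k) + permMat n (Equiv.swap j k) := by
  ext f g
  simp only [Matrix.add_apply, permMat, Matrix.of_apply, Matrix.one_apply, Equiv.trans_apply]
  have cc : ∀ (p q : Fin n → Fin n), (∀ l, g (p l) = g (q l)) →
      ((∀ l, f l = g (p l)) ↔ (∀ l, f l = g (q l))) :=
    fun p q h => forall_congr' (fun l => by rw [h l])
  have hfg : (f = g) ↔ ∀ l, f l = g l := funext_iff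
  by_cases h1 : g i = g j
  · have A1 : ∀ l, g (Equiv.swap i k (Equiv.swap i j l)) = g (Equiv.swap j k l) := by
      intro l
      by_cases hli : l = i
      · subst hli
        rw [Equiv.swap_apply_left, Equiv.swap_apply_of_ne_of_ne hij.symm hjk,
          Equiv.swap_apply_of_ne_of_ne hij hik, ← h1]
      by_cases hlj : l = j
      · subst hlj
        rw [Equiv.swap_apply_right, Equiv.swap_apply_left, Equiv.swap_apply_left]
      by_cases hlk : l = k
      · subst hlk
        rw [Equiv.swap_apply_of_ne_of_ne (Ne.symm hik) (Ne.symm hjk),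
          Equiv.swap_apply_right, Equiv.swap_apply_right, h1]
      · rw [Equiv.swap_apply_of_ne_of_ne hli hlj, Equiv.swap_apply_of_ne_of_ne hli hlk,
          Equiv.swap_apply_of_ne_of_ne hlj hlk]
    have A2 : ∀ l, g (Equiv.swap i j (Equiv.swap i k l)) = g (Equiv.swap i k l) := by
      intro l
      by_cases h : Equiv.swap i k l = i
      · rw [h, Equiv.swap_apply_left, ← h1]
      by_cases h' : Equiv.swap i k l = j
      · rw [h', Equiv.swap_apply_right, h1]
      · rw [Equiv.swap_apply_of_ne_of_ne h h']
    have A3 : ∀ l, g (Equiv.swap i j l) = g l := by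
      intro l
      by_cases hli : l = i
      · subst hli; rw [Equiv.swap_apply_left, ← h1]
      by_cases hlj : l = j
      · subst hlj; rw [Equiv.swap_apply_right, h1]
      · rw [Equiv.swap_apply_of_ne_of_ne hli hlj]
    simp only [hfg, cc _ _ A1, cc _ _ A2, cc _ _ A3]
    ring
  by_cases h2 : g i = g k
  · have B1 : ∀ l, g (Equiv.swap i k (Equiv.swap i j l)) = g (Equiv.swap i j l) := by
      intro l
      by_cases h : Equiv.swap i j l = i
      · rw [h, Equiv.swap_apply_left, ← h2]
      by_cases h' : Equiv.swap i j l = k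
      · rw [h', Equiv.swap_apply_right, h2]
      · rw [Equiv.swap_apply_of_ne_of_ne h h']
    have B2 : ∀ l, g (Equiv.swap i j (Equiv.swap i k l)) = g (Equiv.swap j k l) := by
      intro l
      by_cases hli : l = i
      · subst hli
        rw [Equiv.swap_apply_left, Equiv.swap_apply_of_ne_of_ne (Ne.symm hik) (Ne.symm hjk),
          Equiv.swap_apply_of_ne_of_ne hij hik, h2]
      by_cases hlj : l = j
      · subst hlj
        rw [Equiv.swap_apply_of_ne_of_ne (Ne.symm hij) hjk, Equiv.swap_apply_right,
          Equiv.swap_apply_left, h2]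
      by_cases hlk : l = k
      · subst hlk
        rw [Equiv.swap_apply_right, Equiv.swap_apply_left, Equiv.swap_apply_right]
      · rw [Equiv.swap_apply_of_ne_of_ne hli hlk, Equiv.swap_apply_of_ne_of_ne hli hlj,
          Equiv.swap_apply_of_ne_of_ne hlj hlk]
    have B3 : ∀ l, g (Equiv.swap i k l) = g l := by
      intro l
      by_cases hli : l = i
      · subst hli; rw [Equiv.swap_apply_left, ← h2]
      by_cases hlk : l = k
      · subst hlk; rw [Equiv.swap_apply_right, h2]
      · rw [Equiv.swap_apply_of_ne_of_ne hli hlk]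
    simp only [hfg, cc _ _ B1, cc _ _ B2, cc _ _ B3]
    ring
  · have h3 : g j = g k :=
      (by decide : ∀ a b c : Fin 2, a ≠ b → a ≠ c → b = c) (g i) (g j) (g k) h1 h2
    have C1 : ∀ l, g (Equiv.swap i k (Equiv.swap i j l)) = g (Equiv.swap i k l) := by
      intro l
      by_cases hli : l = i
      · subst hli
        rw [Equiv.swap_apply_left, Equiv.swap_apply_of_ne_of_ne hij.symm hjk,
          Equiv.swap_apply_left, h3]
      by_cases hlj : l = j
      · subst hlj
        rw [Equiv.swap_apply_right, Equiv.swap_apply_left,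
          Equiv.swap_apply_of_ne_of_ne hij.symm hjk, ← h3]
      by_cases hlk : l = k
      · subst hlk
        rw [Equiv.swap_apply_of_ne_of_ne hik.symm hjk.symm]
      · rw [Equiv.swap_apply_of_ne_of_ne hli hlj]
    have C2 : ∀ l, g (Equiv.swap i j (Equiv.swap i k l)) = g (Equiv.swap i j l) := by
      intro l
      by_cases hli : l = i
      · subst hli
        rw [Equiv.swap_apply_left, Equiv.swap_apply_of_ne_of_ne hik.symm hjk.symm,
          Equiv.swap_apply_left, ← h3]
      by_cases hlj : l = j
      · subst hlj
        rw [Equiv.swap_apply_of_ne_of_ne hij.symm hjk]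
      by_cases hlk : l = k
      · subst hlk
        rw [Equiv.swap_apply_right, Equiv.swap_apply_left,
          Equiv.swap_apply_of_ne_of_ne hik.symm hjk.symm, h3]
      · rw [Equiv.swap_apply_of_ne_of_ne hli hlk]
    have C3 : ∀ l, g (Equiv.swap j k l) = g l := by
      intro l
      by_cases hlj : l = j
      · subst hlj; rw [Equiv.swap_apply_left, ← h3]
      by_cases hlk : l = k
      · subst hlk; rw [Equiv.swap_apply_right, h3]
      · rw [Equiv.swap_apply_of_ne_of_ne hlj hlk]
    simp only [hfg, cc _ _ C1, cc _ _ C2, cc _ _ C3]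
    ring


variable {m : Type*} [Fintype m] [DecidableEq m]

lemma trace_nonneg_of_psd (M : Matrix m m ℂ) (hM : M.PosSemidef) : 0 ≤ M.trace.re := by
  have h : ∀ i, 0 ≤ M i i := fun i => by
    exact hM.diag_nonneg
  have : (0:ℂ) ≤ M.trace := Finset.sum_nonneg fun i _ => h i
  exact (Complex.le_def.mp this).1

lemma trace_re_nonneg_of_sq (M ρ : Matrix m m ℂ) (hρ : ρ.PosSemidef)
    (hM : Mᴴ = M) (μ : ℝ) (hμ : 0 < μ) (hsq : M * M = (μ:ℂ) • M) :
    0 ≤ ((M * ρ).trace).re := by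
  have hpsd : (M * ρ * Mᴴ).PosSemidef := hρ.mul_mul_conjTranspose_same M
  have h1 : (M * ρ * Mᴴ).trace = (μ:ℂ) * (M * ρ).trace := by
    rw [trace_mul_cycle, hM, hsq, smul_mul_assoc, trace_smul, smul_eq_mul]
  have h2 := trace_nonneg_of_psd _ hpsd
  rw [h1] at h2
  have h3 : ((μ:ℂ) * (M * ρ).trace).re = μ * ((M * ρ).trace).re := by
    simp [Complex.mul_re]
  rw [h3] at h2
  nlinarith [h2, hμ, mul_pos hμ hμ]

section algebra
variable (A B C : Matrix m m ℂ)
variable (hA2 : A * A = 1) (hB2 : B * B = 1) (hC2 : C * C = 1)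
variable (hAB : A * B + B * A + 1 = A + B + C)
variable (hAC : A * C + C * A + 1 = A + B + C)
variable (hBC : B * C + C * B + 1 = A + B + C)

include hA2 hB2 hC2 hAB hAC hBC in
lemma expand_sq (α β γ δ : ℂ) :
    (α • 1 + β • A + γ • B + δ • C) * (α • 1 + β • A + γ • B + δ • C)
      = (α^2 + β^2 + γ^2 + δ^2 - (β*γ + β*δ + γ*δ)) • 1
        + (2*α*β + (β*γ + β*δ + γ*δ)) • A
        + (2*α*γ + (β*γ + β*δ + γ*δ)) • B
        + (2*α*δ + (β*γ + β*δ + γ*δ)) • C := by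
  have e1 : A * B = A + B + C - 1 - B * A := by
    rw [← hAB]; abel
  have e2 : C * A = A + B + C - 1 - A * C := by
    rw [← hAC]; abel
  have e3 : B * C = A + B + C - 1 - C * B := by
    rw [← hBC]; abel
  simp only [add_mul, mul_add, smul_mul_assoc, mul_smul_comm, smul_smul, one_mul, mul_one,
    hA2, hB2, hC2, e1, e2, e3]
  module

end algebra

section combo
variable (A B C ρ : Matrix m m ℂ)
variable (hρ : ρ.PosSemidef) (htr : ρ.trace = 1)
variable (hA2 : A * A = 1) (hB2 : B * B = 1) (hC2 : C * C = 1)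
variable (hAB : A * B + B * A + 1 = A + B + C)
variable (hAC : A * C + C * A + 1 = A + B + C)
variable (hBC : B * C + C * B + 1 = A + B + C)
variable (hAh : Aᴴ = A) (hBh : Bᴴ = B) (hCh : Cᴴ = C)

include hρ htr hA2 hB2 hC2 hAB hAC hBC hAh hBh hCh in
lemma combo_nonneg (α β γ δ μ : ℝ) (hμ : 0 < μ)
    (h0 : α^2 + β^2 + γ^2 + δ^2 - (β*γ + β*δ + γ*δ) = μ*α)
    (h1 : 2*α*β + (β*γ + β*δ + γ*δ) = μ*β)
    (h2 : 2*α*γ + (β*γ + β*δ + γ*δ) = μ*γ)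
    (h3 : 2*α*δ + (β*γ + β*δ + γ*δ) = μ*δ) :
    0 ≤ α + β * ((A * ρ).trace).re + γ * ((B * ρ).trace).re + δ * ((C * ρ).trace).re := by
  set M : Matrix m m ℂ := (α:ℂ) • 1 + (β:ℂ) • A + (γ:ℂ) • B + (δ:ℂ) • C with hMdef
  have hherm : Mᴴ = M := by
    simp [hMdef, Matrix.conjTranspose_add, Matrix.conjTranspose_smul, Matrix.conjTranspose_one,
      hAh, hBh, hCh, Complex.star_def, Complex.conj_ofReal]
  have hsq : M * M = ((μ:ℝ):ℂ) • M := by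
    rw [hMdef, expand_sq A B C hA2 hB2 hC2 hAB hAC hBC]
    have c0 : ((α:ℂ)^2 + (β:ℂ)^2 + (γ:ℂ)^2 + (δ:ℂ)^2 - ((β:ℂ)*(γ:ℂ) + (β:ℂ)*(δ:ℂ) + (γ:ℂ)*(δ:ℂ)))
        = (μ:ℂ)*(α:ℂ) := by exact_mod_cast congrArg (Complex.ofReal) h0
    have c1 : 2*(α:ℂ)*(β:ℂ) + ((β:ℂ)*(γ:ℂ) + (β:ℂ)*(δ:ℂ) + (γ:ℂ)*(δ:ℂ)) = (μ:ℂ)*(β:ℂ) := by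
      exact_mod_cast congrArg (Complex.ofReal) h1
    have c2 : 2*(α:ℂ)*(γ:ℂ) + ((β:ℂ)*(γ:ℂ) + (β:ℂ)*(δ:ℂ) + (γ:ℂ)*(δ:ℂ)) = (μ:ℂ)*(γ:ℂ) := by
      exact_mod_cast congrArg (Complex.ofReal) h2
    have c3 : 2*(α:ℂ)*(δ:ℂ) + ((β:ℂ)*(γ:ℂ) + (β:ℂ)*(δ:ℂ) + (γ:ℂ)*(δ:ℂ)) = (μ:ℂ)*(δ:ℂ) := by
      exact_mod_cast congrArg (Complex.ofReal) h3
    rw [c0, c1, c2, c3]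
    module
  have key := trace_re_nonneg_of_sq M ρ hρ hherm μ hμ hsq
  have htrace : ((M * ρ).trace).re
      = α + β * ((A * ρ).trace).re + γ * ((B * ρ).trace).re + δ * ((C * ρ).trace).re := by
    have : M * ρ = (α:ℂ) • ρ + (β:ℂ) • (A * ρ) + (γ:ℂ) • (B * ρ) + (δ:ℂ) • (C * ρ) := by
      rw [hMdef]
      simp only [Matrix.add_mul, Matrix.smul_mul, Matrix.one_mul]
    rw [this]
    simp only [Matrix.trace_add, Matrix.trace_smul, htr, smul_eq_mul, mul_one]
    simp [Complex.add_re, Complex.mul_re, Complex.ofReal_re, Complex.ofReal_im]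
  rw [htrace] at key
  exact key
end combo

lemma endgame (u v w : ℝ) (hv : 0 ≤ v) (hw : 0 ≤ w)
    (hup : ∀ t : ℝ, 0 < t → u - v - w ≤ t * v + w / t)
    (hdown : ∀ t : ℝ, 0 < t → v + w - u ≤ t * v + w / t) :
    (u - v - w)^2 ≤ 4 * (v * w) := by
  refine le_of_forall_pos_le_add fun ε' hε' => ?_
  set ε : ℝ := min 1 (ε' / (4 * (v + w + 1) + 4)) with hεdef
  have hεpos : 0 < ε := by
    apply lt_min one_pos
    positivity
  have hε1 : ε ≤ 1 := min_le_left _ _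
  have hε2 : ε ≤ ε' / (4 * (v + w + 1) + 4) := min_le_right _ _
  have hvε : 0 < v + ε := by linarith
  have hwε : 0 < w + ε := by linarith
  set t : ℝ := Real.sqrt (w + ε) / Real.sqrt (v + ε) with htdef
  have ht : 0 < t := by
    apply div_pos (Real.sqrt_pos.mpr hwε) (Real.sqrt_pos.mpr hvε)
  have hsv : Real.sqrt (v + ε) ≠ 0 := ne_of_gt (Real.sqrt_pos.mpr hvε)
  have hsw : Real.sqrt (w + ε) ≠ 0 := ne_of_gt (Real.sqrt_pos.mpr hwε)
  have hb1 : t * (v + ε) = Real.sqrt (v + ε) * Real.sqrt (w + ε) := by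
    rw [htdef]
    field_simp
    rw [Real.sq_sqrt hvε.le]
  have hb2 : (w + ε) / t = Real.sqrt (v + ε) * Real.sqrt (w + ε) := by
    rw [htdef]
    field_simp
    rw [Real.sq_sqrt hwε.le]
  have bound : t * v + w / t ≤ 2 * (Real.sqrt (v + ε) * Real.sqrt (w + ε)) := by
    have b1 : t * v ≤ t * (v + ε) := by nlinarith
    have b2 : w / t ≤ (w + ε) / t := by
      apply div_le_div_of_nonneg_right (by linarith) ht.le
    rw [hb1] at b1; rw [hb2] at b2; linarith
  have hsq : (u - v - w)^2 ≤ (2 * (Real.sqrt (v + ε) * Real.sqrt (w + ε)))^2 := by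
    apply sq_le_sq'
    · have := hdown t ht; linarith
    · have := hup t ht; linarith
  have hval : (2 * (Real.sqrt (v + ε) * Real.sqrt (w + ε)))^2 = 4 * ((v + ε) * (w + ε)) := by
    rw [mul_pow, mul_pow, Real.sq_sqrt hvε.le, Real.sq_sqrt hwε.le]
    ring
  rw [hval] at hsq
  have hfin : 4 * ((v + ε) * (w + ε)) ≤ 4 * (v * w) + ε' := by
    have h4 : 0 < 4 * (v + w + 1) + 4 := by positivity
    have hε2' : ε * (4 * (v + w + 1) + 4) ≤ ε' := (le_div_iff₀ h4).mp hε2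
    nlinarith [hε2', hε1, hεpos.le, hv, hw]
  linarith


set_option maxHeartbeats 2000000 in
theorem swap_triangle_inequalities (n : ℕ) (hn : 3 ≤ n)
    (ρ : Matrix (Fin n → Fin 2) (Fin n → Fin 2) ℂ)
    (hρ : ρ.PosSemidef) (htr : ρ.trace = 1)
    (i j k : Fin n) (hij : i ≠ j) (hik : i ≠ k) (hjk : j ≠ k) :
    (0 ≤ ((swapOp n i j * ρ).trace).re + ((swapOp n i k * ρ).trace).re
        + ((swapOp n j k * ρ).trace).re) ∧
    (((swapOp n i j * ρ).trace).re + ((swapOp n i k * ρ).trace).re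
        + ((swapOp n j k * ρ).trace).re ≤ 3) ∧
    (((swapOp n i j * ρ).trace).re ^ 2 + ((swapOp n i k * ρ).trace).re ^ 2
        + ((swapOp n j k * ρ).trace).re ^ 2
      + 2 * (((swapOp n i j * ρ).trace).re + ((swapOp n i k * ρ).trace).re
        + ((swapOp n j k * ρ).trace).re)
      - 2 * (((swapOp n i j * ρ).trace).re * ((swapOp n i k * ρ).trace).re
        + ((swapOp n i j * ρ).trace).re * ((swapOp n j k * ρ).trace).re
        + ((swapOp n i k * ρ).trace).re * ((swapOp n j k * ρ).trace).re) ≤ 3) := by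
  set A := swapOp n i j with hA
  set B := swapOp n i k with hB
  set C := swapOp n j k with hC
  have hAe : A = permMat n (Equiv.swap i j) := swapOp_eq i j hij
  have hBe : B = permMat n (Equiv.swap i k) := swapOp_eq i k hik
  have hCe : C = permMat n (Equiv.swap j k) := swapOp_eq j k hjk
  have hAh : Aᴴ = A := by rw [hAe]; exact permMat_conjTranspose n _ (Equiv.swap_swap i j)
  have hBh : Bᴴ = B := by rw [hBe]; exact permMat_conjTranspose n _ (Equiv.swap_swap i k)
  have hCh : Cᴴ = C := by rw [hCe]; exact permMat_conjTranspose n _ (Equiv.swap_swap j k)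
  have hA2 : A * A = 1 := by rw [hAe, permMat_mul, Equiv.swap_swap, permMat_refl]
  have hB2 : B * B = 1 := by rw [hBe, permMat_mul, Equiv.swap_swap, permMat_refl]
  have hC2 : C * C = 1 := by rw [hCe, permMat_mul, Equiv.swap_swap, permMat_refl]
  have hAB : A * B + B * A + 1 = A + B + C := by
    rw [hAe, hBe, hCe, permMat_mul, permMat_mul]
    exact permMat_qubit i j k hij hik hjk
  have hAC : A * C + C * A + 1 = A + B + C := by
    have h := permMat_qubit j i k hij.symm hjk hik
    rw [Equiv.swap_comm j i] at h
    rw [hAe, hBe, hCe, permMat_mul, permMat_mul, h]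
    abel
  have hBC : B * C + C * B + 1 = A + B + C := by
    have h := permMat_qubit k i j hik.symm hjk.symm hij
    rw [Equiv.swap_comm k i, Equiv.swap_comm k j] at h
    rw [hAe, hBe, hCe, permMat_mul, permMat_mul, h]
    abel
  set a := ((A * ρ).trace).re with ha
  set b := ((B * ρ).trace).re with hb
  set c := ((C * ρ).trace).re with hc
  have combo := combo_nonneg A B C ρ hρ htr hA2 hB2 hC2 hAB hAC hBC hAh hBh hCh
  have I1 : 0 ≤ (0:ℝ) + 1 * a + 1 * b + 1 * c := by
    apply combo 0 1 1 1 3 (by norm_num) <;> norm_num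
  have I2 : 0 ≤ (3:ℝ) + (-1) * a + (-1) * b + (-1) * c := by
    apply combo 3 (-1) (-1) (-1) 3 (by norm_num) <;> norm_num
  have I4 : 0 ≤ (1:ℝ) + 0 * a + (-1) * b + 0 * c := by
    apply combo 1 0 (-1) 0 2 (by norm_num) <;> norm_num
  have I5 : 0 ≤ (1:ℝ) + 0 * a + 0 * b + (-1) * c := by
    apply combo 1 0 0 (-1) 2 (by norm_num) <;> norm_num
  have hup : ∀ t : ℝ, 0 < t → (1 - a) - (1 - b) - (1 - c) ≤ t * (1 - b) + (1 - c) / t := by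
    intro t ht
    have ht' : t ≠ 0 := ne_of_gt ht
    have I6 : 0 ≤ (1 + t + t⁻¹) + 1 * a + (-(1 + t)) * b + (-(1 + t⁻¹)) * c := by
      apply combo (1 + t + t⁻¹) 1 (-(1 + t)) (-(1 + t⁻¹)) (2 * (1 + t + t⁻¹))
        (by positivity) <;> (field_simp; try ring)
    rw [div_eq_mul_inv]
    nlinarith [I6]
  have hdown : ∀ t : ℝ, 0 < t → (1 - b) + (1 - c) - (1 - a) ≤ t * (1 - b) + (1 - c) / t := by
    intro t ht
    have ht' : t ≠ 0 := ne_of_gt ht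
    have hμ7 : 0 < 2 * (t + t⁻¹ - 1) := by
      have h2 : 2 ≤ t + t⁻¹ := by
        have := sq_nonneg (t - 1)
        have h3 : t * (t + t⁻¹) = t * t + 1 := by field_simp; try ring
        nlinarith
      linarith
    have I7 : 0 ≤ (t + t⁻¹ - 1) + (-1) * a + (1 - t) * b + (1 - t⁻¹) * c := by
      apply combo (t + t⁻¹ - 1) (-1) (1 - t) (1 - t⁻¹) (2 * (t + t⁻¹ - 1)) hμ7 <;>
        (field_simp; try ring)
    rw [div_eq_mul_inv]
    nlinarith [I7]
  have hkey : ((1 - a) - (1 - b) - (1 - c))^2 ≤ 4 * ((1 - b) * (1 - c)) :=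
    endgame (1 - a) (1 - b) (1 - c) (by linarith) (by linarith) hup hdown
  refine ⟨by linarith, by linarith, by nlinarith [hkey]⟩
end
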